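/- Let ρ : T → (0,∞) be a C^1 function on the one-dimensional torus with ∫_T ρ dx = 1, and let α > 1/2. Then for every x ∈ T, ρ(x)^α ≤ 1 + (α/(α−1/2)) ∫_T ρ^{1/2} |∂_x(ρ^{α−1/2})| dx. -/

import Mathlib

open MeasureTheory

/-- For a positive `C¹` function `ρ` on the unit torus with unit mass and `α > 1/2`,
`ρ(x)^α ≤ 1 + (α/(α−1/2)) ∫ ρ^{1/2} |∂ₓ(ρ^{α−1/2})|` for every `x`. -/
theorem rpow_alpha_bound (ρ : ℝ → ℝ) (α : ℝ) (hα : 1/2 < α)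
    (hper : Function.Periodic ρ 1) (hpos : ∀ x, 0 < ρ x)
    (hC1 : ContDiff ℝ 1 ρ) (hmass : (∫ x in (0:ℝ)..1, ρ x) = 1)
    (x : ℝ) :
    ρ x ^ α ≤ 1 + (α / (α - 1/2)) *
      ∫ y in (0:ℝ)..1, ρ y ^ ((1:ℝ)/2) * |deriv (fun z => ρ z ^ (α - 1/2)) y| := by
  have hαpos : 0 < α := lt_trans (by norm_num) hα
  have hαhalf : 0 < α - 1/2 := by linarith
  have hρc : Continuous ρ := hC1.continuous
  have hρ' : Continuous (deriv ρ) := hC1.continuous_deriv le_rfl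
  have hd : ∀ z, HasDerivAt ρ (deriv ρ z) z :=
    fun z => (hC1.differentiable one_ne_zero z).hasDerivAt
  -- derivative of ρ^α
  have hg : ∀ z, HasDerivAt (fun z => ρ z ^ α)
      (deriv ρ z * α * ρ z ^ (α - 1)) z := by
    intro z
    exact (hd z).rpow_const (Or.inl (hpos z).ne')
  -- derivative of ρ^(α-1/2)
  have hh : ∀ z, HasDerivAt (fun z => ρ z ^ (α - 1/2))
      (deriv ρ z * (α - 1/2) * ρ z ^ (α - 1/2 - 1)) z := by
    intro z
    exact (hd z).rpow_const (Or.inl (hpos z).ne')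
  have hderivh : ∀ z, deriv (fun z => ρ z ^ (α - 1/2)) z
      = deriv ρ z * (α - 1/2) * ρ z ^ (α - 1/2 - 1) := fun z => (hh z).deriv
  -- pointwise identity: |deriv ρ^α| = (α/(α-1/2)) ρ^{1/2} |deriv ρ^{α-1/2}|
  have hpt : ∀ z, |deriv ρ z * α * ρ z ^ (α - 1)|
      = (α / (α - 1/2)) * (ρ z ^ ((1:ℝ)/2) * |deriv (fun z => ρ z ^ (α - 1/2)) z|) := by
    intro z
    rw [hderivh z]
    have h1 : ρ z ^ ((1:ℝ)/2) * ρ z ^ (α - 1/2 - 1) = ρ z ^ (α - 1) := by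
      rw [← Real.rpow_add (hpos z)]; ring_nf
    rw [abs_mul, abs_mul, abs_mul, abs_mul]
    rw [abs_of_pos hαpos, abs_of_pos hαhalf,
      abs_of_pos (Real.rpow_pos_of_pos (hpos z) _),
      abs_of_pos (Real.rpow_pos_of_pos (hpos z) _)]
    rw [← h1, div_mul_eq_mul_div, eq_div_iff hαhalf.ne']
    ring
  -- continuity of the integrands
  have hcontF : Continuous (fun z => ρ z ^ ((1:ℝ)/2) * |deriv (fun z => ρ z ^ (α - 1/2)) z|) := by
    have : Continuous (fun z => deriv (fun z => ρ z ^ (α - 1/2)) z) := by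
      simp only [hderivh]
      exact (hρ'.mul continuous_const).mul (hρc.rpow_const fun z => Or.inl (hpos z).ne')
    exact (hρc.rpow_const fun z => Or.inl (hpos z).ne').mul this.abs
  have hcontG : Continuous (fun z => deriv ρ z * α * ρ z ^ (α - 1)) :=
    (hρ'.mul continuous_const).mul (hρc.rpow_const fun z => Or.inl (hpos z).ne')
  -- periodicity of the integrand
  have hdper : ∀ z, deriv ρ (z + 1) = deriv ρ z := by
    intro z
    have h2 : HasDerivAt (fun w => ρ (w + 1)) (deriv ρ (z + 1) * 1) z :=
      (hd (z + 1)).comp z ((hasDerivAt_id z).add_const 1)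
    have h3 : HasDerivAt ρ (deriv ρ (z + 1) * 1) z := by
      have : (fun w => ρ (w + 1)) = ρ := funext fun w => hper w
      rwa [this] at h2
    have := h3.deriv
    simpa using this.symm
  have hDper : ∀ z, deriv (fun z => ρ z ^ (α - 1/2)) (z + 1)
      = deriv (fun z => ρ z ^ (α - 1/2)) z := by
    intro z
    rw [hderivh, hderivh, hdper z, hper z]
  have hperF : Function.Periodic
      (fun z => ρ z ^ ((1:ℝ)/2) * |deriv (fun z => ρ z ^ (α - 1/2)) z|) 1 := by
    intro z
    show ρ (z + 1) ^ ((1:ℝ)/2) * _ = _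
    rw [hper z, hDper z]
  -- ∫ over [x-1, x] equals ∫ over [0,1] for periodic functions
  have hint_per : ∀ (f : ℝ → ℝ), Function.Periodic f 1 →
      (∫ y in (x-1)..x, f y) = ∫ y in (0:ℝ)..1, f y := by
    intro f hf
    have := hf.intervalIntegral_add_eq (x - 1) 0
    simpa using this
  -- a point where ρ ≤ 1
  obtain ⟨y₀, hy₀mem, hy₀min⟩ :=
    (isCompact_Icc (a := x - 1) (b := x)).exists_isMinOn
      (Set.nonempty_Icc.2 (by linarith)) hρc.continuousOn
  have hy₀le : ρ y₀ ≤ 1 := by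
    by_contra h
    push_neg at h
    have hmono : (∫ y in (x-1)..x, (ρ y₀ : ℝ)) ≤ ∫ y in (x-1)..x, ρ y := by
      apply intervalIntegral.integral_mono_on (by linarith)
        intervalIntegrable_const (hρc.intervalIntegrable _ _)
      intro z hz
      exact hy₀min hz
    rw [intervalIntegral.integral_const] at hmono
    rw [hint_per ρ hper, hmass] at hmono
    simp at hmono
    linarith
  -- FTC
  have hftc : ∫ y in y₀..x, deriv ρ y * α * ρ y ^ (α - 1)
      = ρ x ^ α - ρ y₀ ^ α := by
    apply intervalIntegral.integral_eq_sub_of_hasDerivAt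
    · intro t _; exact hg t
    · exact hcontG.intervalIntegrable _ _
  have hy₀x : y₀ ≤ x := hy₀mem.2
  have habs : |∫ y in y₀..x, deriv ρ y * α * ρ y ^ (α - 1)|
      ≤ ∫ y in y₀..x, |deriv ρ y * α * ρ y ^ (α - 1)| :=
    intervalIntegral.abs_integral_le_integral_abs hy₀x
  have hmono2 : (∫ y in y₀..x, |deriv ρ y * α * ρ y ^ (α - 1)|)
      ≤ ∫ y in (x-1)..x, |deriv ρ y * α * ρ y ^ (α - 1)| := by
    apply intervalIntegral.integral_mono_interval hy₀mem.1 hy₀x le_rfl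
    · filter_upwards with z using abs_nonneg _
    · exact hcontG.abs.intervalIntegrable _ _
  have hrewrite : (∫ y in (x-1)..x, |deriv ρ y * α * ρ y ^ (α - 1)|)
      = (α / (α - 1/2)) *
        ∫ y in (0:ℝ)..1, ρ y ^ ((1:ℝ)/2) * |deriv (fun z => ρ z ^ (α - 1/2)) y| := by
    have : (∫ y in (x-1)..x, |deriv ρ y * α * ρ y ^ (α - 1)|)
        = ∫ y in (x-1)..x, (α / (α - 1/2)) *
          (ρ y ^ ((1:ℝ)/2) * |deriv (fun z => ρ z ^ (α - 1/2)) y|) := by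
      congr 1; funext z; exact hpt z
    rw [this, intervalIntegral.integral_const_mul, hint_per _ hperF]
  have hy₀pow : ρ y₀ ^ α ≤ 1 :=
    Real.rpow_le_one (hpos y₀).le hy₀le hαpos.le
  calc ρ x ^ α = ρ y₀ ^ α + (ρ x ^ α - ρ y₀ ^ α) := by ring
    _ ≤ 1 + |∫ y in y₀..x, deriv ρ y * α * ρ y ^ (α - 1)| := by
        rw [hftc]; exact add_le_add hy₀pow (le_abs_self _)
    _ ≤ 1 + (α / (α - 1/2)) *
        ∫ y in (0:ℝ)..1, ρ y ^ ((1:ℝ)/2) * |deriv (fun z => ρ z ^ (α - 1/2)) y| := by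
        rw [← hrewrite]
        exact add_le_add le_rfl (habs.trans hmono2)
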